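/- Suppose f(x) = Σ α_m x^m and g(x) = Σ β_m x^m are power series converging for all real x, with β_m > 0 for all m, and the sequence (α_m/β_m) is strictly decreasing. Then f(x)/g(x) is strictly decreasing for x > 0. -/

import Mathlib

private lemma norm_summable_aux {γ : ℕ → ℝ} (h : ∀ x : ℝ, Summable fun m : ℕ => γ m * x ^ m)
    (x : ℝ) : Summable fun m : ℕ => ‖γ m * x ^ m‖ := by
  set r : ℝ := 2 * |x| + 1 with hr
  have hr0 : 0 < r := by positivity
  have ht : Filter.Tendsto (fun m : ℕ => ‖γ m * r ^ m‖) Filter.atTop (nhds 0) := by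
    simpa using ((h r).tendsto_atTop_zero).norm
  obtain ⟨C, hC⟩ := ht.bddAbove_range
  have hC' : ∀ m, ‖γ m * r ^ m‖ ≤ C := fun m => hC ⟨m, rfl⟩
  have hC0 : 0 ≤ C := le_trans (norm_nonneg _) (hC' 0)
  have hxr : |x| / r ≤ 1 / 2 := by
    rw [div_le_iff₀ hr0, hr]
    have := abs_nonneg x
    linarith
  have hgeo : Summable fun m : ℕ => C * (1 / 2 : ℝ) ^ m :=
    (summable_geometric_of_lt_one (by norm_num) (by norm_num)).mul_left C
  refine Summable.of_nonneg_of_le (fun m => norm_nonneg _) (fun m => ?_) hgeo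
  have key : ‖γ m * x ^ m‖ = ‖γ m * r ^ m‖ * (|x| / r) ^ m := by
    rw [norm_mul, norm_mul, norm_pow, norm_pow, Real.norm_eq_abs, Real.norm_eq_abs,
      Real.norm_eq_abs, abs_of_pos hr0, div_pow]
    field_simp
  rw [key]
  exact mul_le_mul (hC' m) (pow_le_pow_left₀ (by positivity) hxr m) (by positivity) hC0

private lemma cross_aux {x y : ℝ} (hx : 0 < x) (hxy : x < y) {m n : ℕ} (hmn : m < n) :
    x ^ n * y ^ m < x ^ m * y ^ n := by
  have hy : 0 < y := hx.trans hxy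
  have h1 : (x / y) ^ n < (x / y) ^ m :=
    pow_lt_pow_right_of_lt_one₀ (by positivity) (by rw [div_lt_one hy]; exact hxy) hmn
  rw [div_pow, div_pow, div_lt_div_iff₀ (by positivity) (by positivity)] at h1
  exact h1

private lemma hasSum_mul_aux {A B : ℕ → ℝ} {s t : ℝ} (hA : HasSum A s) (hB : HasSum B t)
    (hA' : Summable fun m => ‖A m‖) (hB' : Summable fun m => ‖B m‖) :
    HasSum (fun p : ℕ × ℕ => A p.1 * B p.2) (s * t) :=
  hA.mul hB (summable_mul_of_summable_norm hA' hB')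

set_option maxHeartbeats 1000000 in
theorem stmt_15 (f g : ℝ → ℝ) (α β : ℕ → ℝ)
    (hf : ∀ x : ℝ, HasSum (fun m : ℕ => α m * x ^ m) (f x))
    (hg : ∀ x : ℝ, HasSum (fun m : ℕ => β m * x ^ m) (g x))
    (hβ : ∀ m, 0 < β m)
    (hdec : StrictAnti (fun m : ℕ => α m / β m)) :
    StrictAntiOn (fun x => f x / g x) (Set.Ioi (0 : ℝ)) := by
  have hfs : ∀ x : ℝ, Summable fun m : ℕ => α m * x ^ m := fun x => ⟨f x, hf x⟩
  have hgs : ∀ x : ℝ, Summable fun m : ℕ => β m * x ^ m := fun x => ⟨g x, hg x⟩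
  have hgpos : ∀ x : ℝ, 0 < x → 0 < g x := by
    intro x hx
    have h0 : β 0 * x ^ 0 ≤ g x :=
      le_hasSum (hg x) 0 (fun j _ => mul_nonneg (hβ j).le (pow_nonneg hx.le j))
    simpa using lt_of_lt_of_le (by simpa using hβ 0) h0
  intro x hx y hy hxy
  simp only [Set.mem_Ioi] at hx hy
  have hy0 : 0 < y := hy
  -- double sums
  have hF : HasSum (fun p : ℕ × ℕ => (α p.1 * x ^ p.1) * (β p.2 * y ^ p.2)) (f x * g y) :=
    hasSum_mul_aux (hf x) (hg y) (norm_summable_aux hfs x) (norm_summable_aux hgs y)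
  have hG : HasSum (fun p : ℕ × ℕ => (α p.1 * y ^ p.1) * (β p.2 * x ^ p.2)) (f y * g x) :=
    hasSum_mul_aux (hf y) (hg x) (norm_summable_aux hfs y) (norm_summable_aux hgs x)
  set D : ℝ := f x * g y - f y * g x with hD
  have hh : HasSum (fun p : ℕ × ℕ =>
      (α p.1 * x ^ p.1) * (β p.2 * y ^ p.2) - (α p.1 * y ^ p.1) * (β p.2 * x ^ p.2)) D :=
    hF.sub hG
  have hhsw : HasSum (fun p : ℕ × ℕ =>
      (α p.2 * x ^ p.2) * (β p.1 * y ^ p.1) - (α p.2 * y ^ p.2) * (β p.1 * x ^ p.1)) D :=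
    ((Equiv.prodComm ℕ ℕ).hasSum_iff).2 hh
  have hH : HasSum (fun p : ℕ × ℕ =>
      ((α p.1 * x ^ p.1) * (β p.2 * y ^ p.2) - (α p.1 * y ^ p.1) * (β p.2 * x ^ p.2)) +
      ((α p.2 * x ^ p.2) * (β p.1 * y ^ p.1) - (α p.2 * y ^ p.2) * (β p.1 * x ^ p.1)))
      (D + D) := hh.add hhsw
  have hnonneg : ∀ p : ℕ × ℕ,
      0 ≤ ((α p.1 * x ^ p.1) * (β p.2 * y ^ p.2) - (α p.1 * y ^ p.1) * (β p.2 * x ^ p.2)) +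
      ((α p.2 * x ^ p.2) * (β p.1 * y ^ p.1) - (α p.2 * y ^ p.2) * (β p.1 * x ^ p.1)) := by
    rintro ⟨m, n⟩
    simp only
    rcases lt_trichotomy m n with h | h | h
    · have h1 : α n * β m < α m * β n := by
        have := hdec h
        simp only at this
        rwa [div_lt_div_iff₀ (hβ n) (hβ m)] at this
      have h2 : x ^ n * y ^ m < x ^ m * y ^ n := cross_aux hx hxy h
      nlinarith [mul_pos (sub_pos.2 h1) (sub_pos.2 h2)]
    · subst h; nlinarith []
    · have h1 : α m * β n < α n * β m := by
        have := hdec h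
        simp only at this
        rwa [div_lt_div_iff₀ (hβ m) (hβ n)] at this
      have h2 : x ^ m * y ^ n < x ^ n * y ^ m := cross_aux hx hxy h
      nlinarith [mul_pos (sub_pos.2 h1) (sub_pos.2 h2)]
  have hterm : (0 : ℝ) <
      ((α 0 * x ^ 0) * (β 1 * y ^ 1) - (α 0 * y ^ 0) * (β 1 * x ^ 1)) +
      ((α 1 * x ^ 1) * (β 0 * y ^ 0) - (α 1 * y ^ 1) * (β 0 * x ^ 0)) := by
    have h1 : α 1 * β 0 < α 0 * β 1 := by
      have := hdec (show (0:ℕ) < 1 by norm_num)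
      simp only at this
      rwa [div_lt_div_iff₀ (hβ 1) (hβ 0)] at this
    nlinarith [mul_pos (sub_pos.2 h1) (sub_pos.2 hxy)]
  have hle : ((α 0 * x ^ 0) * (β 1 * y ^ 1) - (α 0 * y ^ 0) * (β 1 * x ^ 1)) +
      ((α 1 * x ^ 1) * (β 0 * y ^ 0) - (α 1 * y ^ 1) * (β 0 * x ^ 0)) ≤ D + D :=
    le_hasSum hH ((0 : ℕ), (1 : ℕ)) (fun j _ => hnonneg j)
  have hDpos : 0 < D := by linarith
  show f y / g y < f x / g x
  rw [div_lt_div_iff₀ (hgpos y hy0) (hgpos x hx)]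
  rw [hD] at hDpos
  linarith
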